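/- Let Λ ≥ 2 and let χ_Λ be an ultraviolet cutoff function. There exists C > 0 such that for all β ∈ (0, 1/2], ∫_{ℝ⁹} χ_Λ(|k₁|)² χ_Λ(|k₂|)² χ_Λ(|k₃|)² / [ (|k₁| + |k₂| + |k₃| + |k₁ + k₂ + k₃|²)² · |k₁| |k₂| |k₃| · (|k₁| + |k₁|² + β)² ] dk₁ dk₂ dk₃ ≤ C log(1/β). -/

import Mathlib

open MeasureTheory
open Measure Set ENNReal

noncomputable section ThreePhotonAux

lemma lintegral_fun_norm_addHaar' {E : Type*} [NormedAddCommGroup E] [NormedSpace ℝ E]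
    [MeasurableSpace E] [BorelSpace E] [Nontrivial E] [FiniteDimensional ℝ E]
    (μ : Measure E) [μ.IsAddHaarMeasure] (f : ℝ → ℝ≥0∞) (hf : Measurable f) :
    ∫⁻ x, f ‖x‖ ∂μ = μ.toSphere univ *
      ∫⁻ y in Ioi (0:ℝ), ENNReal.ofReal (y ^ (Module.finrank ℝ E - 1)) * f y := by
  calc
    ∫⁻ x, f ‖x‖ ∂μ = ∫⁻ x : ({(0:E)}ᶜ : Set E), f ‖(x : E)‖ ∂(μ.comap (↑)) := by
      rw [lintegral_subtype_comap (measurableSet_singleton (0:E)).compl fun x ↦ f ‖x‖,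
        restrict_compl_singleton]
    _ = ∫⁻ p : Metric.sphere (0 : E) 1 × Ioi (0 : ℝ), f p.2
        ∂(μ.toSphere.prod (volumeIoiPow (Module.finrank ℝ E - 1))) := by
      refine Eq.trans ?_ (μ.measurePreserving_homeomorphUnitSphereProd.lintegral_comp_emb
        (Homeomorph.measurableEmbedding _) (fun p ↦ f p.2))
      simp
    _ = μ.toSphere univ * ∫⁻ y : Ioi (0:ℝ), f y ∂(volumeIoiPow (Module.finrank ℝ E - 1)) := by
      have := lintegral_prod_mul (μ := μ.toSphere)
        (ν := volumeIoiPow (Module.finrank ℝ E - 1))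
        (f := fun _ : Metric.sphere (0:E) 1 => (1 : ℝ≥0∞)) (g := fun y : Ioi (0:ℝ) => f y)
        aemeasurable_const ((hf.comp measurable_subtype_coe).aemeasurable)
      simpa using this
    _ = _ := by
      congr 1
      rw [volumeIoiPow, lintegral_withDensity_eq_lintegral_mul _
        ((measurable_subtype_coe.pow_const _).ennreal_ofReal)
        (show Measurable fun y : Ioi (0:ℝ) => f y from hf.comp measurable_subtype_coe)]
      exact lintegral_subtype_comap measurableSet_Ioi
        (fun y => ENNReal.ofReal (y ^ (Module.finrank ℝ E - 1)) * f y)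

/-- weight for the two "soft" photons -/
def G2 (Λ : ℝ) : ℝ → ℝ≥0∞ := (Set.Ioc (0:ℝ) Λ).indicator fun r => ENNReal.ofReal ((r ^ 2)⁻¹)

/-- weight for the photon carrying the resolvent singularity -/
def G1 (Λ β : ℝ) : ℝ → ℝ≥0∞ :=
  (Set.Ioc (0:ℝ) Λ).indicator fun r => ENNReal.ofReal ((r * (r + β) ^ 2)⁻¹)

lemma G2_measurable (Λ : ℝ) : Measurable (G2 Λ) :=
  Measurable.indicator (((measurable_id.pow_const 2).inv).ennreal_ofReal) measurableSet_Ioc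

lemma G1_measurable (Λ β : ℝ) : Measurable (G1 Λ β) :=
  Measurable.indicator
    ((measurable_id.mul (((measurable_id.add_const β).pow_const 2))).inv.ennreal_ofReal)
    measurableSet_Ioc

lemma G2_oneDim (Λ : ℝ) (hΛ : 0 ≤ Λ) :
    ∫⁻ y in Ioi (0:ℝ), ENNReal.ofReal (y ^ 2) * G2 Λ y = ENNReal.ofReal Λ := by
  have h : ∀ y : ℝ, ENNReal.ofReal (y ^ 2) * G2 Λ y
      = (Set.Ioc (0:ℝ) Λ).indicator (fun _ => (1:ℝ≥0∞)) y := by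
    intro y
    by_cases hy : y ∈ Set.Ioc (0:ℝ) Λ
    · rw [G2, indicator_of_mem hy, indicator_of_mem hy, ← ENNReal.ofReal_mul (by positivity),
        mul_inv_cancel₀ (pow_ne_zero 2 (ne_of_gt hy.1)), ENNReal.ofReal_one]
    · rw [G2, indicator_of_notMem hy, indicator_of_notMem hy, mul_zero]
  simp_rw [h]
  rw [lintegral_indicator measurableSet_Ioc, Measure.restrict_restrict measurableSet_Ioc,
    Set.Ioc_inter_Ioi, sup_of_le_left le_rfl, lintegral_const,
    Measure.restrict_apply MeasurableSet.univ, Set.univ_inter, Real.volume_Ioc, sub_zero, one_mul]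

lemma G1_oneDim (Λ β : ℝ) (hΛ : 0 ≤ Λ) (hβ : 0 < β) :
    ∫⁻ y in Ioi (0:ℝ), ENNReal.ofReal (y ^ 2) * G1 Λ β y
      ≤ ENNReal.ofReal (Real.log ((Λ + β) / β)) := by
  have h : ∀ y : ℝ, ENNReal.ofReal (y ^ 2) * G1 Λ β y
      ≤ (Set.Ioc (0:ℝ) Λ).indicator (fun r => ENNReal.ofReal ((r + β)⁻¹)) y := by
    intro y
    by_cases hy : y ∈ Set.Ioc (0:ℝ) Λ
    · rw [G1, indicator_of_mem hy, indicator_of_mem hy, ← ENNReal.ofReal_mul (by positivity)]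
      apply ENNReal.ofReal_le_ofReal
      have hy0 : 0 < y := hy.1
      have hyβ : 0 < y + β := by linarith
      rw [← div_eq_mul_inv, ← one_div, div_le_div_iff₀ (by positivity) (by positivity)]
      nlinarith [sq_nonneg y, sq_nonneg (y + β), mul_pos hy0 hyβ]
    · rw [G1, indicator_of_notMem hy, indicator_of_notMem hy, mul_zero]
  calc ∫⁻ y in Ioi (0:ℝ), ENNReal.ofReal (y ^ 2) * G1 Λ β y
      ≤ ∫⁻ y in Ioi (0:ℝ),
          (Set.Ioc (0:ℝ) Λ).indicator (fun r => ENNReal.ofReal ((r + β)⁻¹)) y :=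
        lintegral_mono h
    _ = ∫⁻ y in Ioc (0:ℝ) Λ, ENNReal.ofReal ((y + β)⁻¹) := by
        rw [lintegral_indicator measurableSet_Ioc, Measure.restrict_restrict measurableSet_Ioc,
          Set.Ioc_inter_Ioi, sup_of_le_left le_rfl]
    _ = ENNReal.ofReal (∫ y in Ioc (0:ℝ) Λ, (y + β)⁻¹) := by
        rw [← ofReal_integral_eq_lintegral_ofReal]
        · apply IntegrableOn.mono_set (t := Set.Icc (0:ℝ) Λ) _ Set.Ioc_subset_Icc_self
          apply ContinuousOn.integrableOn_Icc
          apply ContinuousOn.inv₀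
          · fun_prop
          · intro x hx; have := hx.1; positivity
        · filter_upwards [ae_restrict_mem measurableSet_Ioc] with y hy
          have : 0 < y + β := by have := hy.1; positivity
          positivity
    _ ≤ ENNReal.ofReal (Real.log ((Λ + β) / β)) := by
        apply ENNReal.ofReal_le_ofReal
        rw [← intervalIntegral.integral_of_le hΛ]
        rw [intervalIntegral.integral_comp_add_right (fun y => y⁻¹)]
        rw [zero_add, integral_inv_of_pos hβ (by linarith)]

end ThreePhotonAux

lemma not_mem_Ioc_cases {Λ r : ℝ} (hr : 0 ≤ r) (h : r ∉ Set.Ioc 0 Λ) : r = 0 ∨ Λ < r := by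
  rcases eq_or_lt_of_le hr with h0 | h0
  · exact Or.inl h0.symm
  · right; by_contra hc; push_neg at hc; exact h ⟨h0, hc⟩

lemma radial3 (G : ℝ → ℝ≥0∞) (hG : Measurable G) :
    ∫⁻ x : EuclideanSpace ℝ (Fin 3), G ‖x‖ =
      (volume : Measure (EuclideanSpace ℝ (Fin 3))).toSphere univ *
        ∫⁻ y in Ioi (0:ℝ), ENNReal.ofReal (y ^ 2) * G y := by
  have h := lintegral_fun_norm_addHaar' (volume : Measure (EuclideanSpace ℝ (Fin 3))) G hG
  rw [h]
  norm_num [finrank_euclideanSpace_fin]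

/-- `χ : ℝ → ℝ` is an ultraviolet cutoff function at scale `Λ`: it is `C¹`,
takes values in `[0,1]`, equals `1` on `[0, Λ-1]` and vanishes on `[Λ, ∞)`. -/
def IsUVCutoff (Λ : ℝ) (χ : ℝ → ℝ) : Prop :=
  ContDiff ℝ 1 χ ∧ (∀ t, 0 ≤ χ t) ∧ (∀ t, χ t ≤ 1) ∧
    (∀ t, 0 ≤ t → t ≤ Λ - 1 → χ t = 1) ∧ (∀ t, Λ ≤ t → χ t = 0)

set_option maxHeartbeats 2000000 in
/-- The nine-dimensional integral estimate underlying the three-photon bound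
`‖(H_f + P_f²)^{-1} A⁺·A⁺ F₀‖² = O(α³ log α⁻¹)`. -/
theorem three_photon_integral_bound (Λ : ℝ) (hΛ : 2 ≤ Λ) (χ : ℝ → ℝ)
    (hχ : IsUVCutoff Λ χ) :
    ∃ C > (0 : ℝ), ∀ β ∈ Set.Ioc (0 : ℝ) (1 / 2 : ℝ),
      ∫ k : EuclideanSpace ℝ (Fin 3) × EuclideanSpace ℝ (Fin 3) × EuclideanSpace ℝ (Fin 3),
          (χ ‖k.1‖) ^ 2 * (χ ‖k.2.1‖) ^ 2 * (χ ‖k.2.2‖) ^ 2 /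
            ((‖k.1‖ + ‖k.2.1‖ + ‖k.2.2‖ + ‖k.1 + k.2.1 + k.2.2‖ ^ 2) ^ 2 *
              (‖k.1‖ * ‖k.2.1‖ * ‖k.2.2‖) * (‖k.1‖ + ‖k.1‖ ^ 2 + β) ^ 2)
        ≤ C * Real.log (1 / β) := by
  obtain ⟨hχC, hχ0, hχ1, -, hχtop⟩ := hχ
  have hχcont : Continuous χ := hχC.continuous
  have hΛ0 : (0:ℝ) ≤ Λ := by linarith
  set S : ℝ≥0∞ := (volume : Measure (EuclideanSpace ℝ (Fin 3))).toSphere univ with hSdef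
  have hS_ne : S ≠ ⊤ := measure_ne_top _ _
  set s : ℝ := S.toReal with hsdef
  have hs0 : 0 ≤ s := ENNReal.toReal_nonneg
  have hlog2 : 0 < Real.log 2 := Real.log_pos one_lt_two
  have hlogΛ : 0 ≤ Real.log (Λ + 1) := Real.log_nonneg (by linarith)
  have hK0 : 0 ≤ Real.log (Λ + 1) / Real.log 2 + 1 := by positivity
  refine ⟨s ^ 3 * Λ ^ 2 * (Real.log (Λ + 1) / Real.log 2 + 1) + 1, by positivity, ?_⟩
  rintro β ⟨hβ0, hβh⟩
  have hβ1 : β < 1 := by linarith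
  have hLnn : 0 ≤ Real.log ((Λ + β) / β) :=
    Real.log_nonneg ((one_le_div hβ0).2 (by linarith))
  -- measurability of the integrand
  have hNcont : Continuous fun k : EuclideanSpace ℝ (Fin 3) × EuclideanSpace ℝ (Fin 3) ×
      EuclideanSpace ℝ (Fin 3) =>
      (χ ‖k.1‖) ^ 2 * (χ ‖k.2.1‖) ^ 2 * (χ ‖k.2.2‖) ^ 2 := by fun_prop
  have hDcont : Continuous fun k : EuclideanSpace ℝ (Fin 3) × EuclideanSpace ℝ (Fin 3) ×
      EuclideanSpace ℝ (Fin 3) =>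
      (‖k.1‖ + ‖k.2.1‖ + ‖k.2.2‖ + ‖k.1 + k.2.1 + k.2.2‖ ^ 2) ^ 2 *
        (‖k.1‖ * ‖k.2.1‖ * ‖k.2.2‖) * (‖k.1‖ + ‖k.1‖ ^ 2 + β) ^ 2 := by fun_prop
  have hfmeas := (hNcont.measurable.div hDcont.measurable).aestronglyMeasurable
    (μ := (volume : Measure (EuclideanSpace ℝ (Fin 3) × EuclideanSpace ℝ (Fin 3) ×
      EuclideanSpace ℝ (Fin 3))))
  have hfnn : ∀ k : EuclideanSpace ℝ (Fin 3) × EuclideanSpace ℝ (Fin 3) ×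
      EuclideanSpace ℝ (Fin 3),
      0 ≤ (χ ‖k.1‖) ^ 2 * (χ ‖k.2.1‖) ^ 2 * (χ ‖k.2.2‖) ^ 2 /
        ((‖k.1‖ + ‖k.2.1‖ + ‖k.2.2‖ + ‖k.1 + k.2.1 + k.2.2‖ ^ 2) ^ 2 *
          (‖k.1‖ * ‖k.2.1‖ * ‖k.2.2‖) * (‖k.1‖ + ‖k.1‖ ^ 2 + β) ^ 2) := by
    intro k
    apply div_nonneg (by positivity)
    have h1 : (0:ℝ) ≤ ‖k.1‖ := norm_nonneg _
    have h2 : (0:ℝ) ≤ ‖k.2.1‖ := norm_nonneg _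
    have h3 : (0:ℝ) ≤ ‖k.2.2‖ := norm_nonneg _
    positivity
  -- pointwise domination
  have hpt : ∀ k : EuclideanSpace ℝ (Fin 3) × EuclideanSpace ℝ (Fin 3) ×
      EuclideanSpace ℝ (Fin 3),
      ENNReal.ofReal ((χ ‖k.1‖) ^ 2 * (χ ‖k.2.1‖) ^ 2 * (χ ‖k.2.2‖) ^ 2 /
        ((‖k.1‖ + ‖k.2.1‖ + ‖k.2.2‖ + ‖k.1 + k.2.1 + k.2.2‖ ^ 2) ^ 2 *
          (‖k.1‖ * ‖k.2.1‖ * ‖k.2.2‖) * (‖k.1‖ + ‖k.1‖ ^ 2 + β) ^ 2))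
        ≤ G1 Λ β ‖k.1‖ * (G2 Λ ‖k.2.1‖ * G2 Λ ‖k.2.2‖) := by
    intro k
    by_cases h1 : ‖k.1‖ ∈ Set.Ioc (0:ℝ) Λ
    · by_cases h2 : ‖k.2.1‖ ∈ Set.Ioc (0:ℝ) Λ
      · by_cases h3 : ‖k.2.2‖ ∈ Set.Ioc (0:ℝ) Λ
        · -- main case
          rw [G1, G2, indicator_of_mem h1, indicator_of_mem h2, indicator_of_mem h3,
            ← ENNReal.ofReal_mul (by positivity), ← ENNReal.ofReal_mul (by positivity)]
          apply ENNReal.ofReal_le_ofReal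
          set r₁ := ‖k.1‖
          set r₂ := ‖k.2.1‖
          set r₃ := ‖k.2.2‖
          set t := ‖k.1 + k.2.1 + k.2.2‖
          have hr₁ : 0 < r₁ := h1.1
          have hr₂ : 0 < r₂ := h2.1
          have hr₃ : 0 < r₃ := h3.1
          have ht : 0 ≤ t := norm_nonneg _
          have hNle : (χ r₁) ^ 2 * (χ r₂) ^ 2 * (χ r₃) ^ 2 ≤ 1 := by
            have e1 : (χ r₁) ^ 2 ≤ 1 := pow_le_one₀ (hχ0 _) (hχ1 _)
            have e2 : (χ r₂) ^ 2 ≤ 1 := pow_le_one₀ (hχ0 _) (hχ1 _)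
            have e3 : (χ r₃) ^ 2 ≤ 1 := pow_le_one₀ (hχ0 _) (hχ1 _)
            exact mul_le_one₀ (mul_le_one₀ e1 (sq_nonneg _) e2) (sq_nonneg _) e3
          have hD' : (0:ℝ) < r₁ * (r₁ + β) ^ 2 * (r₂ ^ 2 * r₃ ^ 2) := by positivity
          have hDD : r₁ * (r₁ + β) ^ 2 * (r₂ ^ 2 * r₃ ^ 2)
              ≤ (r₁ + r₂ + r₃ + t ^ 2) ^ 2 * (r₁ * r₂ * r₃) * (r₁ + r₁ ^ 2 + β) ^ 2 := by
            have key1 : r₂ * r₃ ≤ (r₁ + r₂ + r₃ + t ^ 2) ^ 2 := by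
              nlinarith [sq_nonneg (r₂ + r₃), sq_nonneg t, sq_nonneg (r₂ - r₃),
                mul_nonneg (by positivity : (0:ℝ) ≤ r₁ + t ^ 2)
                  (by positivity : (0:ℝ) ≤ r₂ + r₃), sq_nonneg (r₁ + t ^ 2)]
            have key2 : (r₁ + β) ^ 2 ≤ (r₁ + r₁ ^ 2 + β) ^ 2 := by
              nlinarith [mul_nonneg (sq_nonneg r₁)
                (by positivity : (0:ℝ) ≤ 2 * (r₁ + β) + r₁ ^ 2)]
            calc r₁ * (r₁ + β) ^ 2 * (r₂ ^ 2 * r₃ ^ 2)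
                = (r₂ * r₃) * (r₁ * r₂ * r₃) * ((r₁ + β) ^ 2) := by ring
              _ ≤ (r₁ + r₂ + r₃ + t ^ 2) ^ 2 * (r₁ * r₂ * r₃) * (r₁ + r₁ ^ 2 + β) ^ 2 := by
                  gcongr
          calc (χ r₁) ^ 2 * (χ r₂) ^ 2 * (χ r₃) ^ 2 /
                ((r₁ + r₂ + r₃ + t ^ 2) ^ 2 * (r₁ * r₂ * r₃) * (r₁ + r₁ ^ 2 + β) ^ 2)
              ≤ 1 / (r₁ * (r₁ + β) ^ 2 * (r₂ ^ 2 * r₃ ^ 2)) :=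
                div_le_div₀ zero_le_one hNle hD' hDD
            _ = (r₁ * (r₁ + β) ^ 2)⁻¹ * ((r₂ ^ 2)⁻¹ * (r₃ ^ 2)⁻¹) := by
                rw [one_div, mul_inv, show ((r₂:ℝ) ^ 2 * r₃ ^ 2)⁻¹ = (r₂ ^ 2)⁻¹ * (r₃ ^ 2)⁻¹ from mul_inv _ _]
        · -- ‖k.2.2‖ outside
          rcases not_mem_Ioc_cases (norm_nonneg k.2.2) h3 with h | h
          · rw [show (‖k.1‖ * ‖k.2.1‖ * ‖k.2.2‖) = 0 by rw [h, mul_zero], mul_zero, zero_mul,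
              _root_.div_zero, ENNReal.ofReal_zero]
            exact zero_le
          · rw [hχtop _ h.le]
            norm_num
      · rcases not_mem_Ioc_cases (norm_nonneg k.2.1) h2 with h | h
        · rw [show (‖k.1‖ * ‖k.2.1‖ * ‖k.2.2‖) = 0 by rw [h, mul_zero, zero_mul], mul_zero,
            zero_mul, _root_.div_zero, ENNReal.ofReal_zero]
          exact zero_le
        · rw [hχtop _ h.le]
          norm_num
    · rcases not_mem_Ioc_cases (norm_nonneg k.1) h1 with h | h
      · rw [show (‖k.1‖ * ‖k.2.1‖ * ‖k.2.2‖) = 0 by rw [h, zero_mul, zero_mul], mul_zero,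
          zero_mul, _root_.div_zero, ENNReal.ofReal_zero]
        exact zero_le
      · rw [hχtop _ h.le]
        norm_num
  -- the three single-particle integrals
  have hG1n : Measurable fun x : EuclideanSpace ℝ (Fin 3) => G1 Λ β ‖x‖ :=
    (G1_measurable Λ β).comp measurable_norm
  have hG2n : Measurable fun x : EuclideanSpace ℝ (Fin 3) => G2 Λ ‖x‖ :=
    (G2_measurable Λ).comp measurable_norm
  have hI2 : ∫⁻ x : EuclideanSpace ℝ (Fin 3), G2 Λ ‖x‖ = S * ENNReal.ofReal Λ := by
    rw [radial3 _ (G2_measurable Λ), G2_oneDim Λ hΛ0]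
  have hI1 : ∫⁻ x : EuclideanSpace ℝ (Fin 3), G1 Λ β ‖x‖
      ≤ S * ENNReal.ofReal (Real.log ((Λ + β) / β)) := by
    rw [radial3 _ (G1_measurable Λ β)]
    exact mul_le_mul_right (G1_oneDim Λ β hΛ0 hβ0) S
  -- the nine-dimensional lintegral bound
  have hmain : (∫⁻ k : EuclideanSpace ℝ (Fin 3) × EuclideanSpace ℝ (Fin 3) ×
      EuclideanSpace ℝ (Fin 3),
      ENNReal.ofReal ((χ ‖k.1‖) ^ 2 * (χ ‖k.2.1‖) ^ 2 * (χ ‖k.2.2‖) ^ 2 /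
        ((‖k.1‖ + ‖k.2.1‖ + ‖k.2.2‖ + ‖k.1 + k.2.1 + k.2.2‖ ^ 2) ^ 2 *
          (‖k.1‖ * ‖k.2.1‖ * ‖k.2.2‖) * (‖k.1‖ + ‖k.1‖ ^ 2 + β) ^ 2)))
      ≤ S * ENNReal.ofReal (Real.log ((Λ + β) / β)) *
          (S * ENNReal.ofReal Λ * (S * ENNReal.ofReal Λ)) := by
    calc _ ≤ ∫⁻ k : EuclideanSpace ℝ (Fin 3) × EuclideanSpace ℝ (Fin 3) ×
            EuclideanSpace ℝ (Fin 3), G1 Λ β ‖k.1‖ * (G2 Λ ‖k.2.1‖ * G2 Λ ‖k.2.2‖) :=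
          lintegral_mono hpt
      _ = (∫⁻ x : EuclideanSpace ℝ (Fin 3), G1 Λ β ‖x‖) *
          ∫⁻ p : EuclideanSpace ℝ (Fin 3) × EuclideanSpace ℝ (Fin 3),
            G2 Λ ‖p.1‖ * G2 Λ ‖p.2‖ := by
          rw [volume_eq_prod]
          exact lintegral_prod_mul hG1n.aemeasurable
            (((hG2n.comp measurable_fst).mul (hG2n.comp measurable_snd)).aemeasurable)
      _ = (∫⁻ x : EuclideanSpace ℝ (Fin 3), G1 Λ β ‖x‖) *
          ((∫⁻ x : EuclideanSpace ℝ (Fin 3), G2 Λ ‖x‖) *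
            ∫⁻ x : EuclideanSpace ℝ (Fin 3), G2 Λ ‖x‖) := by
          rw [volume_eq_prod, lintegral_prod_mul hG2n.aemeasurable hG2n.aemeasurable]
      _ ≤ _ := by
          rw [hI2]
          exact mul_le_mul' hI1 le_rfl
  -- pass to the Bochner integral
  rw [integral_eq_lintegral_of_nonneg_ae (ae_of_all _ hfnn) hfmeas]
  have hRne : S * ENNReal.ofReal (Real.log ((Λ + β) / β)) *
      (S * ENNReal.ofReal Λ * (S * ENNReal.ofReal Λ)) ≠ ⊤ := by
    apply ENNReal.mul_ne_top (ENNReal.mul_ne_top hS_ne ENNReal.ofReal_ne_top)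
    exact ENNReal.mul_ne_top (ENNReal.mul_ne_top hS_ne ENNReal.ofReal_ne_top)
      (ENNReal.mul_ne_top hS_ne ENNReal.ofReal_ne_top)
  have htor := ENNReal.toReal_mono hRne hmain
  refine htor.trans ?_
  rw [ENNReal.toReal_mul, ENNReal.toReal_mul, ENNReal.toReal_mul, ENNReal.toReal_mul,
    ENNReal.toReal_ofReal hLnn, ENNReal.toReal_ofReal hΛ0]
  -- now a purely real estimate
  have hlogβ : Real.log 2 ≤ Real.log (1 / β) := by
    apply Real.log_le_log two_pos
    rw [le_div_iff₀ hβ0]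
    linarith
  have hlogβpos : 0 < Real.log (1 / β) := lt_of_lt_of_le hlog2 hlogβ
  have hL : Real.log ((Λ + β) / β)
      ≤ (Real.log (Λ + 1) / Real.log 2 + 1) * Real.log (1 / β) := by
    rw [Real.log_div (by linarith) (ne_of_gt hβ0)]
    have e1 : Real.log (Λ + β) ≤ Real.log (Λ + 1) :=
      Real.log_le_log (by linarith) (by linarith)
    have e2 : -Real.log β = Real.log (1 / β) := by
      rw [one_div, Real.log_inv]
    have e3 : Real.log (Λ + 1) ≤ Real.log (Λ + 1) / Real.log 2 * Real.log (1 / β) := by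
      calc Real.log (Λ + 1) = Real.log (Λ + 1) / Real.log 2 * Real.log 2 := by
            field_simp
        _ ≤ Real.log (Λ + 1) / Real.log 2 * Real.log (1 / β) := by
            apply mul_le_mul_of_nonneg_left hlogβ (by positivity)
    nlinarith
  calc s * Real.log ((Λ + β) / β) * (s * Λ * (s * Λ))
      ≤ s * ((Real.log (Λ + 1) / Real.log 2 + 1) * Real.log (1 / β)) * (s * Λ * (s * Λ)) := by
        apply mul_le_mul_of_nonneg_right (mul_le_mul_of_nonneg_left hL hs0) (by positivity)
    _ = s ^ 3 * Λ ^ 2 * (Real.log (Λ + 1) / Real.log 2 + 1) * Real.log (1 / β) := by ring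
    _ ≤ (s ^ 3 * Λ ^ 2 * (Real.log (Λ + 1) / Real.log 2 + 1) + 1) * Real.log (1 / β) := by
        nlinarith
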